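/- Let A00, A0, A1 be complete subalgebras of a complete Boolean algebra A with A00 ⊆ A0 and A00 ⊆ A1. Then projections in the diagram (A00; A0, A1; A) are correct (i.e., whenever a0 ∈ A0 and a1 ∈ A1 are nonzero with h_{A00}(a0) = h_{A00}(a1), then a0 ⊓ a1 ≠ ⊥) if and only if the following lifting property holds: for all x0 ∈ X_{A0} and x1 ∈ X_{A1} whose restrictions to A00 (compositions with the inclusion homomorphisms) coincide, there exists x ∈ X_A whose restriction to A0 is x0 and whose restriction to A1 is x1. -/

import Mathlib

/-- A complete subalgebra of a complete Boolean algebra `A`: a subset containing `⊥`,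
closed under complementation and under suprema of arbitrary subsets. -/
structure CompleteSubalgebra {A : Type*} [CompleteBooleanAlgebra A] (S : Set A) : Prop where
  bot_mem : ⊥ ∈ S
  compl_mem : ∀ a ∈ S, aᶜ ∈ S
  sSup_mem : ∀ T ⊆ S, sSup T ∈ S

/-- The projection onto a complete subalgebra: `h_S(a) = sInf {s ∈ S : a ≤ s}`. -/
def projSub {A : Type*} [CompleteBooleanAlgebra A] (S : Set A) (a : A) : A :=
  sInf {s | s ∈ S ∧ a ≤ s}

/-- `x : A → Bool` is, on the subalgebra `S`, a bounded lattice homomorphism to `Bool`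
(i.e. it determines a point of the Stone space of `S`). -/
def IsHomOn {A : Type*} [CompleteBooleanAlgebra A] (S : Set A) (x : A → Bool) : Prop :=
  x ⊤ = true ∧ x ⊥ = false ∧
  (∀ a ∈ S, ∀ b ∈ S, x (a ⊓ b) = (x a && x b)) ∧
  (∀ a ∈ S, ∀ b ∈ S, x (a ⊔ b) = (x a || x b))

section Aux
variable {A : Type*} [CompleteBooleanAlgebra A]

/-- A plain subalgebra: enough closure for the finitary arguments. -/
def IsSubalg (S : Set A) : Prop :=
  ⊥ ∈ S ∧ ⊤ ∈ S ∧ (∀ a ∈ S, aᶜ ∈ S) ∧ (∀ a ∈ S, ∀ b ∈ S, a ⊓ b ∈ S)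

lemma CompleteSubalgebra.isSubalg {S : Set A} (hS : CompleteSubalgebra S) : IsSubalg S := by
  have htop : ⊤ ∈ S := by
    have := hS.compl_mem ⊥ hS.bot_mem
    simpa using this
  refine ⟨hS.bot_mem, htop, hS.compl_mem, ?_⟩
  intro a ha b hb
  have h1 : aᶜ ⊔ bᶜ ∈ S := by
    have : sSup {aᶜ, bᶜ} ∈ S := hS.sSup_mem _ (by
      intro x hx; rcases hx with rfl | hx
      · exact hS.compl_mem a ha
      · simp at hx; subst hx; exact hS.compl_mem b hb)
    simpa using this
  have := hS.compl_mem _ h1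
  simpa [compl_sup] using this

lemma isSubalg_univ : IsSubalg (Set.univ : Set A) :=
  ⟨trivial, trivial, fun _ _ => trivial, fun _ _ _ _ => trivial⟩

lemma CompleteSubalgebra.sInf_mem {S : Set A} (hS : CompleteSubalgebra S)
    {T : Set A} (hT : T ⊆ S) : sInf T ∈ S := by
  have h1 : sSup (Compl.compl '' T) ∈ S := hS.sSup_mem _ (by
    rintro x ⟨t, ht, rfl⟩; exact hS.compl_mem t (hT ht))
  have := hS.compl_mem _ h1
  rwa [← compl_sInf', compl_compl] at this

lemma projSub_mem {S : Set A} (hS : CompleteSubalgebra S) (a : A) : projSub S a ∈ S :=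
  hS.sInf_mem fun _ hs => hs.1

lemma le_projSub (S : Set A) (a : A) : a ≤ projSub S a := le_sInf fun _ hs => hs.2

lemma projSub_le {S : Set A} {a s : A} (hs : s ∈ S) (h : a ≤ s) : projSub S a ≤ s :=
  sInf_le ⟨hs, h⟩

lemma projSub_ne_bot (S : Set A) {a : A} (ha : a ≠ ⊥) : projSub S a ≠ ⊥ := by
  intro h
  exact ha (le_bot_iff.mp (h ▸ le_projSub S a))

lemma projSub_inf {S : Set A} (hS : CompleteSubalgebra S) (a : A) {s : A} (hs : s ∈ S) :
    projSub S (a ⊓ s) = projSub S a ⊓ s := by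
  have hsub := hS.isSubalg
  apply le_antisymm
  · exact projSub_le (hsub.2.2.2 _ (projSub_mem hS a) _ hs)
      (inf_le_inf_right s (le_projSub S a))
  · have h1 : a ≤ projSub S (a ⊓ s) ⊔ sᶜ := by
      have : a ≤ (a ⊓ s) ⊔ sᶜ := by
        calc a = (a ⊓ s) ⊔ (a ⊓ sᶜ) := by rw [← inf_sup_left, sup_compl_eq_top, inf_top_eq]
        _ ≤ (a ⊓ s) ⊔ sᶜ := sup_le_sup_left inf_le_right _
      exact this.trans (sup_le_sup_right (le_projSub S _) _)
    have hmem : projSub S (a ⊓ s) ⊔ sᶜ ∈ S := by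
      have := hS.compl_mem _ (hsub.2.2.2 _ (hS.compl_mem _ (projSub_mem hS (a ⊓ s))) _
        (hS.compl_mem _ (hS.compl_mem s hs)))
      simpa [compl_inf] using this
    have h2 : projSub S a ≤ projSub S (a ⊓ s) ⊔ sᶜ := projSub_le hmem h1
    calc projSub S a ⊓ s ≤ (projSub S (a ⊓ s) ⊔ sᶜ) ⊓ s := inf_le_inf_right s h2
    _ ≤ projSub S (a ⊓ s) := by
      rw [inf_sup_right]
      simp

/-! ### Facts about homs on a subalgebra -/

lemma IsHomOn.compl_eq {S : Set A} (hS : IsSubalg S) {x : A → Bool} (hx : IsHomOn S x)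
    {a : A} (ha : a ∈ S) : x aᶜ = !x a := by
  obtain ⟨htop, hbot, hinf, hsup⟩ := hx
  have hac : aᶜ ∈ S := hS.2.2.1 a ha
  have h1 : (x a && x aᶜ) = false := by rw [← hinf a ha _ hac]; simpa using hbot
  have h2 : (x a || x aᶜ) = true := by rw [← hsup a ha _ hac]; simpa using htop
  cases h : x a <;> simp [h] at h1 h2 ⊢ <;> simp [h1, h2]

lemma IsHomOn.mono {S : Set A} {x : A → Bool} (hx : IsHomOn S x)
    {a b : A} (ha : a ∈ S) (hb : b ∈ S) (hab : a ≤ b) (hxa : x a = true) : x b = true := by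
  have := hx.2.2.1 a ha b hb
  rw [inf_eq_left.mpr hab, hxa] at this
  cases h : x b
  · rw [h] at this; simp at this
  · rfl

/-- Key extension lemma: any meet-closed family of nonzero elements of a subalgebra `S`
extends to an "ultrafilter" hom on `S`. -/
lemma exists_hom_extending {S : Set A} (hS : IsSubalg S) (F : Set A)
    (hFS : F ⊆ S) (hFne : F.Nonempty)
    (hFmeet : ∀ a ∈ F, ∀ b ∈ F, a ⊓ b ∈ F)
    (hFnz : ∀ a ∈ F, a ≠ ⊥) :
    ∃ x : A → Bool, IsHomOn S x ∧ ∀ a ∈ F, x a = true := by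
  classical
  -- the collection of proper filters of S containing F
  set P : Set (Set A) := {G | G ⊆ S ∧ F ⊆ G ∧ (∀ a ∈ G, ∀ b ∈ G, a ⊓ b ∈ G) ∧
    (∀ a ∈ G, ∀ b ∈ S, a ≤ b → b ∈ G) ∧ ⊥ ∉ G} with hP
  have hG0 : {b | b ∈ S ∧ ∃ a ∈ F, a ≤ b} ∈ P := by
    refine ⟨fun b hb => hb.1, ?_, ?_, ?_, ?_⟩
    · intro a ha; exact ⟨hFS ha, a, ha, le_rfl⟩
    · rintro a ⟨haS, a', ha', haa⟩ b ⟨hbS, b', hb', hbb⟩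
      exact ⟨hS.2.2.2 a haS b hbS, a' ⊓ b', hFmeet a' ha' b' hb',
        inf_le_inf haa hbb⟩
    · rintro a ⟨_, a', ha', haa⟩ b hbS hab
      exact ⟨hbS, a', ha', haa.trans hab⟩
    · rintro ⟨_, a', ha', haa⟩
      exact hFnz a' ha' (le_bot_iff.mp haa)
  obtain ⟨U, hG0U, hUP, hUmax⟩ := zorn_subset_nonempty P (fun c hcP hchain hcne => by
    obtain ⟨G₁, hG₁⟩ := hcne
    refine ⟨⋃₀ c, ⟨?_, ?_, ?_, ?_, ?_⟩, fun s hs => Set.subset_sUnion_of_mem hs⟩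
    · rintro a ⟨G, hG, haG⟩; exact (hcP hG).1 haG
    · intro a ha; exact ⟨G₁, hG₁, (hcP hG₁).2.1 ha⟩
    · rintro a ⟨G, hG, haG⟩ b ⟨G', hG', hbG'⟩
      rcases hchain.total hG hG' with h | h
      · exact ⟨G', hG', (hcP hG').2.2.1 a (h haG) b hbG'⟩
      · exact ⟨G, hG, (hcP hG).2.2.1 a haG b (h hbG')⟩
    · rintro a ⟨G, hG, haG⟩ b hbS hab
      exact ⟨G, hG, (hcP hG).2.2.2.1 a haG b hbS hab⟩
    · rintro ⟨G, hG, hbotG⟩; exact (hcP hG).2.2.2.2 hbotG)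
    _ hG0
  obtain ⟨hUS, hFU, hUmeet, hUup, hUbot⟩ := hUP
  -- top is in U
  obtain ⟨f₀, hf₀⟩ := hFne
  have hUtop : ⊤ ∈ U := hUup f₀ (hFU hf₀) ⊤ hS.2.1 le_top
  -- U is ultra on S
  have hUultra : ∀ a ∈ S, a ∉ U → aᶜ ∈ U := by
    intro a haS haU
    by_contra hacU
    have hGP : {b | b ∈ S ∧ ∃ u ∈ U, u ⊓ a ≤ b} ∈ P := by
      refine ⟨fun b hb => hb.1, ?_, ?_, ?_, ?_⟩
      · intro f hf
        exact ⟨hFS hf, f, hFU hf, inf_le_left⟩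
      · rintro b ⟨hbS, u, hu, hub⟩ b' ⟨hbS', u', hu', hub'⟩
        refine ⟨hS.2.2.2 b hbS b' hbS', u ⊓ u', hUmeet u hu u' hu', ?_⟩
        refine le_inf (le_trans ?_ hub) (le_trans ?_ hub')
        · exact inf_le_inf_right a inf_le_left
        · exact inf_le_inf_right a inf_le_right
      · rintro b ⟨_, u, hu, hub⟩ b' hbS' hbb'
        exact ⟨hbS', u, hu, hub.trans hbb'⟩
      · rintro ⟨_, u, hu, hub⟩
        have : u ≤ aᶜ := le_compl_iff_disjoint_right.mpr (disjoint_iff.mpr (le_bot_iff.mp hub))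
        exact hacU (hUup u hu aᶜ (hS.2.2.1 a haS) this)
    have hsub : U ⊆ {b | b ∈ S ∧ ∃ u ∈ U, u ⊓ a ≤ b} := by
      intro u hu; exact ⟨hUS hu, u, hu, inf_le_left⟩
    have hGsub : {b | b ∈ S ∧ ∃ u ∈ U, u ⊓ a ≤ b} ⊆ U := by
      exact hUmax hGP hsub
    exact haU (hGsub ⟨haS, ⊤, hUtop, by simp⟩)
  -- from U, define x
  refine ⟨fun a => decide (a ∈ U), ⟨by simpa using hUtop, by simpa using hUbot, ?_, ?_⟩,
    fun a ha => by simpa using hFU ha⟩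
  · intro a ha b hb
    have habS : a ⊓ b ∈ S := hS.2.2.2 a ha b hb
    by_cases hA : a ∈ U <;> by_cases hB : b ∈ U
    · simp [hA, hB, hUmeet a hA b hB]
    · have : a ⊓ b ∉ U := fun h => hB (hUup _ h b hb inf_le_right)
      simp [hA, hB, this]
    · have : a ⊓ b ∉ U := fun h => hA (hUup _ h a ha inf_le_left)
      simp [hA, hB, this]
    · have : a ⊓ b ∉ U := fun h => hA (hUup _ h a ha inf_le_left)
      simp [hA, hB, this]
  · intro a ha b hb
    have habS : a ⊔ b ∈ S := by
      have := hS.2.2.1 _ (hS.2.2.2 _ (hS.2.2.1 a ha) _ (hS.2.2.1 b hb))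
      simpa [compl_inf] using this
    by_cases hA : a ∈ U
    · have : a ⊔ b ∈ U := hUup a hA _ habS le_sup_left
      simp [hA, this]
    by_cases hB : b ∈ U
    · have : a ⊔ b ∈ U := hUup b hB _ habS le_sup_right
      simp [hA, hB, this]
    · have hac : aᶜ ∈ U := hUultra a ha hA
      have hbc : bᶜ ∈ U := hUultra b hb hB
      have : a ⊔ b ∉ U := by
        intro h
        have h1 := hUmeet _ (hUmeet _ h _ hac) _ hbc
        rw [show (a ⊔ b) ⊓ aᶜ ⊓ bᶜ = ⊥ by
          rw [inf_assoc, ← compl_sup, inf_compl_eq_bot]] at h1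
        exact hUbot h1
      simp [hA, hB, this]

end Aux

/-- Correctness of the diagram `(A00; A0, A1; A)` is equivalent to the lifting property
for points of the Stone spaces. -/
theorem correct_iff_lifting {A : Type*} [CompleteBooleanAlgebra A]
    (A00 A0 A1 : Set A)
    (h00 : CompleteSubalgebra A00) (h0 : CompleteSubalgebra A0)
    (h1 : CompleteSubalgebra A1)
    (h00_0 : A00 ⊆ A0) (h00_1 : A00 ⊆ A1) :
    (∀ a0 ∈ A0, ∀ a1 ∈ A1, a0 ≠ ⊥ → a1 ≠ ⊥ →
        projSub A00 a0 = projSub A00 a1 → a0 ⊓ a1 ≠ ⊥) ↔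
    (∀ x0 x1 : A → Bool, IsHomOn A0 x0 → IsHomOn A1 x1 →
      (∀ a ∈ A00, x0 a = x1 a) →
      ∃ x : A → Bool, IsHomOn (Set.univ : Set A) x ∧
        (∀ a ∈ A0, x a = x0 a) ∧ (∀ a ∈ A1, x a = x1 a)) := by
  have hs00 := h00.isSubalg
  have hs0 := h0.isSubalg
  have hs1 := h1.isSubalg
  constructor
  · -- correctness → lifting
    intro hcorr x0 x1 hx0 hx1 hagree
    -- the filter base
    set F : Set A := {a | ∃ b0 ∈ A0, ∃ b1 ∈ A1, x0 b0 = true ∧ x1 b1 = true ∧ a = b0 ⊓ b1}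
      with hF
    have hFnz : ∀ a ∈ F, a ≠ ⊥ := by
      rintro a ⟨b0, hb0, b1, hb1, hxb0, hxb1, rfl⟩
      have hb0nz : b0 ≠ ⊥ := fun h => by rw [h, hx0.2.1] at hxb0; exact Bool.false_ne_true hxb0
      have hb1nz : b1 ≠ ⊥ := fun h => by rw [h, hx1.2.1] at hxb1; exact Bool.false_ne_true hxb1
      set c0 := projSub A00 b0 with hc0
      set c1 := projSub A00 b1 with hc1
      have hc0m : c0 ∈ A00 := projSub_mem h00 b0
      have hc1m : c1 ∈ A00 := projSub_mem h00 b1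
      have hx0c0 : x0 c0 = true := hx0.mono hb0 (h00_0 hc0m) (le_projSub _ _) hxb0
      have hx1c1 : x1 c1 = true := hx1.mono hb1 (h00_1 hc1m) (le_projSub _ _) hxb1
      have hx0c1 : x0 c1 = true := (hagree c1 hc1m) ▸ hx1c1
      have hx1c0 : x1 c0 = true := (hagree c0 hc0m).symm ▸ hx0c0
      have hb0' : x0 (b0 ⊓ c1) = true := by
        rw [hx0.2.2.1 b0 hb0 c1 (h00_0 hc1m), hxb0, hx0c1]; rfl
      have hb1' : x1 (b1 ⊓ c0) = true := by
        rw [hx1.2.2.1 b1 hb1 c0 (h00_1 hc0m), hxb1, hx1c0]; rfl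
      have hb0'nz : b0 ⊓ c1 ≠ ⊥ := fun h => by
        rw [h, hx0.2.1] at hb0'; exact Bool.false_ne_true hb0'
      have hb1'nz : b1 ⊓ c0 ≠ ⊥ := fun h => by
        rw [h, hx1.2.1] at hb1'; exact Bool.false_ne_true hb1'
      have hproj : projSub A00 (b0 ⊓ c1) = projSub A00 (b1 ⊓ c0) := by
        rw [projSub_inf h00 b0 hc1m, projSub_inf h00 b1 hc0m, ← hc0, ← hc1, inf_comm]
      have := hcorr (b0 ⊓ c1) (hs0.2.2.2 b0 hb0 c1 (h00_0 hc1m))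
        (b1 ⊓ c0) (hs1.2.2.2 b1 hb1 c0 (h00_1 hc0m)) hb0'nz hb1'nz hproj
      intro hbot
      apply this
      rw [← le_bot_iff]
      calc b0 ⊓ c1 ⊓ (b1 ⊓ c0) ≤ b0 ⊓ b1 := inf_le_inf inf_le_left inf_le_left
      _ = ⊥ := hbot
    obtain ⟨x, hx, hxF⟩ := exists_hom_extending isSubalg_univ F
      (fun _ _ => trivial)
      ⟨⊤, ⊤, hs0.2.1, ⊤, hs1.2.1, hx0.1, hx1.1, (inf_top_eq ⊤).symm⟩
      (by
        rintro a ⟨b0, hb0, b1, hb1, hxb0, hxb1, rfl⟩ a' ⟨b0', hb0', b1', hb1', hxb0', hxb1', rfl⟩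
        refine ⟨b0 ⊓ b0', hs0.2.2.2 b0 hb0 b0' hb0', b1 ⊓ b1',
          hs1.2.2.2 b1 hb1 b1' hb1', ?_, ?_, ?_⟩
        · rw [hx0.2.2.1 b0 hb0 b0' hb0', hxb0, hxb0']; rfl
        · rw [hx1.2.2.1 b1 hb1 b1' hb1', hxb1, hxb1']; rfl
        · exact (inf_inf_inf_comm b0 b1 b0' b1'))
      hFnz
    refine ⟨x, hx, ?_, ?_⟩
    · intro a ha
      cases h : x0 a
      · have hac : x0 aᶜ = true := by
          rw [hx0.compl_eq hs0 ha, h]; rfl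
        have : x aᶜ = true := hxF aᶜ ⟨aᶜ, hs0.2.2.1 a ha, ⊤, hs1.2.1, hac, hx1.1,
          (inf_top_eq aᶜ).symm⟩
        have hcc := hx.compl_eq isSubalg_univ (Set.mem_univ a)
        rw [this] at hcc
        cases h2 : x a
        · rfl
        · rw [h2] at hcc; exact absurd hcc (by simp)
      · exact hxF a ⟨a, ha, ⊤, hs1.2.1, h, hx1.1, (inf_top_eq a).symm⟩
    · intro a ha
      cases h : x1 a
      · have hac : x1 aᶜ = true := by
          rw [hx1.compl_eq hs1 ha, h]; rfl
        have : x aᶜ = true := hxF aᶜ ⟨⊤, hs0.2.1, aᶜ, hs1.2.2.1 a ha, hx0.1, hac,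
          (top_inf_eq aᶜ).symm⟩
        have hcc := hx.compl_eq isSubalg_univ (Set.mem_univ a)
        rw [this] at hcc
        cases h2 : x a
        · rfl
        · rw [h2] at hcc; exact absurd hcc (by simp)
      · exact hxF a ⟨⊤, hs0.2.1, a, ha, hx0.1, h, (top_inf_eq a).symm⟩
  · -- lifting → correctness
    intro hlift a0 ha0 a1 ha1 ha0nz ha1nz hproj hbot
    -- ultrafilter on A0 containing a0
    obtain ⟨x0, hx0, hx0F⟩ := exists_hom_extending hs0 {a0}
      (by simpa using ha0) ⟨a0, rfl⟩
      (by rintro a rfl b rfl; simp) (by rintro a rfl; exact ha0nz)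
    have hxa0 : x0 a0 = true := hx0F a0 rfl
    -- ultrafilter on A1 containing a1 and tracing x0 on A00
    set F1 : Set A := {b | ∃ s ∈ A00, x0 s = true ∧ b = a1 ⊓ s} with hF1
    have hF1nz : ∀ b ∈ F1, b ≠ ⊥ := by
      rintro b ⟨s, hs, hxs, rfl⟩ hb
      -- a1 ≤ sᶜ, so c ≤ sᶜ where c = projSub A00 a1 = projSub A00 a0
      have ha1s : a1 ≤ sᶜ := le_compl_iff_disjoint_right.mpr (disjoint_iff.mpr (le_bot_iff.mp hb.le))
      have hcs : projSub A00 a1 ≤ sᶜ := projSub_le (h00.compl_mem s hs) ha1s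
      -- but a0 ⊓ s ≠ ⊥
      have hx0s : x0 (a0 ⊓ s) = true := by
        rw [hx0.2.2.1 a0 ha0 s (h00_0 hs), hxa0, hxs]; rfl
      have ha0s : a0 ⊓ s ≠ ⊥ := fun h => by
        rw [h, hx0.2.1] at hx0s; exact Bool.false_ne_true hx0s
      have : projSub A00 (a0 ⊓ s) ≠ ⊥ := projSub_ne_bot _ ha0s
      apply this
      rw [projSub_inf h00 a0 hs, hproj, ← le_bot_iff]
      calc projSub A00 a1 ⊓ s ≤ sᶜ ⊓ s := inf_le_inf_right s hcs
      _ = ⊥ := compl_inf_eq_bot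
    obtain ⟨x1, hx1, hx1F⟩ := exists_hom_extending hs1 F1
      (by rintro b ⟨s, hs, _, rfl⟩; exact hs1.2.2.2 a1 ha1 s (h00_1 hs))
      ⟨a1 ⊓ ⊤, ⊤, hs00.2.1, hx0.1, rfl⟩
      (by
        rintro b ⟨s, hs, hxs, rfl⟩ b' ⟨s', hs', hxs', rfl⟩
        refine ⟨s ⊓ s', hs00.2.2.2 s hs s' hs', ?_, ?_⟩
        · rw [hx0.2.2.1 s (h00_0 hs) s' (h00_0 hs'), hxs, hxs']; rfl
        · rw [inf_inf_inf_comm, inf_idem])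
      hF1nz
    have hxa1 : x1 a1 = true := by
      have := hx1F (a1 ⊓ ⊤) ⟨⊤, hs00.2.1, hx0.1, rfl⟩
      rwa [inf_top_eq] at this
    have hagree : ∀ s ∈ A00, x0 s = x1 s := by
      intro s hs
      cases h : x0 s
      · have hxsc : x0 sᶜ = true := by rw [hx0.compl_eq hs0 (h00_0 hs), h]; rfl
        have h1 : x1 (a1 ⊓ sᶜ) = true := hx1F _ ⟨sᶜ, h00.compl_mem s hs, hxsc, rfl⟩
        have h2 : x1 sᶜ = true := hx1.mono (hs1.2.2.2 a1 ha1 sᶜ (h00_1 (h00.compl_mem s hs)))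
          (h00_1 (h00.compl_mem s hs)) inf_le_right h1
        have hcc := hx1.compl_eq hs1 (h00_1 hs)
        rw [h2] at hcc
        cases h3 : x1 s
        · rfl
        · rw [h3] at hcc; exact absurd hcc.symm (by simp)
      · have h1 : x1 (a1 ⊓ s) = true := hx1F _ ⟨s, hs, h, rfl⟩
        have h2 : x1 s = true := hx1.mono (hs1.2.2.2 a1 ha1 s (h00_1 hs))
          (h00_1 hs) inf_le_right h1
        rw [h2]
    obtain ⟨x, hx, hxx0, hxx1⟩ := hlift x0 x1 hx0 hx1 hagree
    have : x (a0 ⊓ a1) = true := by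
      rw [hx.2.2.1 a0 (Set.mem_univ a0) a1 (Set.mem_univ a1), hxx0 a0 ha0, hxx1 a1 ha1,
        hxa0, hxa1]
      rfl
    rw [hbot, hx.2.1] at this
    exact Bool.false_ne_true this
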